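/- arXiv:2410.06132 — 4 statements merged into one kernel-verified Lean document; each statement's English description precedes it below -/
import Mathlib

section
/- For every ε, d₀ > 0 there exists ξ > 0 such that the following holds. Let G be a bipartite graph with parts X and Y whose density d = d_G(X,Y) satisfies d ≥ d₀. If Σ_{x ∈ X} Σ_{x' ∈ X} |N_G(x) ∩ N_G(x')|² ≤ d⁴ |X|² |Y|² + ξ |X|² |Y|², then the pair (X, Y) is ε-regular. -/
open Finset
open scoped Classical

/-- The density of the pair of vertex sets `(A, B)` in the graph `G`:
`e_G(A,B) / (|A| * |B|)`. -/
noncomputable def edgeDensityR {V : Type} (G : SimpleGraph V) (A B : Finset V) : ℝ :=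
  (∑ a ∈ A, ((B.filter fun b => G.Adj a b).card : ℝ)) / ((A.card : ℝ) * (B.card : ℝ))

/-- The pair `(A, B)` is `ε`-regular in `G`. -/
noncomputable def IsRegularPair {V : Type} (G : SimpleGraph V) (A B : Finset V) (ε : ℝ) : Prop :=
  ∀ X ⊆ A, ∀ Y ⊆ B, ε * A.card ≤ X.card → ε * B.card ≤ Y.card →
    |edgeDensityR G X Y - edgeDensityR G A B| ≤ ε


private lemma expand_sq_sum {α : Type*} (s : Finset α) (f : α → ℝ) (k : ℝ) :
    ∑ i ∈ s, (f i - k) ^ 2 =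
      (∑ i ∈ s, f i ^ 2) - 2 * k * (∑ i ∈ s, f i) + (s.card : ℝ) * k ^ 2 := by
  have h : ∀ i ∈ s, (f i - k) ^ 2 = (f i ^ 2 - (2 * k) * f i) + k ^ 2 := fun i _ => by ring
  rw [Finset.sum_congr rfl h, Finset.sum_add_distrib, Finset.sum_sub_distrib,
    ← Finset.mul_sum, Finset.sum_const, nsmul_eq_mul]

private lemma le_of_sq_le_sq'' {x B : ℝ} (h : x ^ 2 ≤ B ^ 2) (hx : 0 ≤ x) (hB : 0 ≤ B) :
    x ≤ B := by nlinarith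

private lemma sum_abs_le_of_sq {α : Type*} (s : Finset α) (f : α → ℝ) (B : ℝ) (hB : 0 ≤ B)
    (h : (s.card : ℝ) * ∑ i ∈ s, f i ^ 2 ≤ B ^ 2) : ∑ i ∈ s, |f i| ≤ B := by
  have h1 : (∑ i ∈ s, |f i|) ^ 2 ≤ (s.card : ℝ) * ∑ i ∈ s, f i ^ 2 := by
    simpa [sq_abs] using sq_sum_le_card_mul_sum_sq (s := s) (f := fun i => |f i|)
  exact le_of_sq_le_sq'' (h1.trans h) (Finset.sum_nonneg fun i _ => abs_nonneg _) hB

private lemma sum_swap4 {α β : Type*} (s : Finset α) (t : Finset β) (g : α → α → β → β → ℝ) :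
    ∑ y ∈ t, ∑ y' ∈ t, ∑ x ∈ s, ∑ x' ∈ s, g x x' y y'
      = ∑ x ∈ s, ∑ x' ∈ s, ∑ y ∈ t, ∑ y' ∈ t, g x x' y y' := by
  calc ∑ y ∈ t, ∑ y' ∈ t, ∑ x ∈ s, ∑ x' ∈ s, g x x' y y'
      = ∑ y ∈ t, ∑ x ∈ s, ∑ y' ∈ t, ∑ x' ∈ s, g x x' y y' := by
        exact Finset.sum_congr rfl fun y _ => Finset.sum_comm
    _ = ∑ x ∈ s, ∑ y ∈ t, ∑ y' ∈ t, ∑ x' ∈ s, g x x' y y' := Finset.sum_comm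
    _ = ∑ x ∈ s, ∑ y ∈ t, ∑ x' ∈ s, ∑ y' ∈ t, g x x' y y' := by
        exact Finset.sum_congr rfl fun x _ => Finset.sum_congr rfl fun y _ => Finset.sum_comm
    _ = ∑ x ∈ s, ∑ x' ∈ s, ∑ y ∈ t, ∑ y' ∈ t, g x x' y y' := by
        exact Finset.sum_congr rfl fun x _ => Finset.sum_comm

set_option maxHeartbeats 1000000 in
theorem quasirandomness_implies_regularity (ε d₀ : ℝ) (hε : 0 < ε) (hd₀ : 0 < d₀) :
    ∃ ξ : ℝ, 0 < ξ ∧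
      ∀ (V : Type) [Fintype V] (G : SimpleGraph V) (X Y : Finset V),
        Disjoint X Y → X ∪ Y = univ →
        (∀ u v : V, G.Adj u v → (u ∈ X ∧ v ∈ Y) ∨ (u ∈ Y ∧ v ∈ X)) →
        d₀ ≤ edgeDensityR G X Y →
        (∑ x ∈ X, ∑ x' ∈ X,
            ((univ.filter fun v => G.Adj x v ∧ G.Adj x' v).card : ℝ) ^ 2) ≤
          edgeDensityR G X Y ^ 4 * (X.card : ℝ) ^ 2 * (Y.card : ℝ) ^ 2 +
            ξ * (X.card : ℝ) ^ 2 * (Y.card : ℝ) ^ 2 →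
        IsRegularPair G X Y ε := by
  set η : ℝ := min 1 (ε ^ 6 / 3) with hη_def
  have hη_pos : 0 < η := lt_min one_pos (by positivity)
  have hη1 : η ≤ 1 := min_le_left _ _
  have hη3 : 3 * η ≤ ε ^ 6 := by
    have h := min_le_right 1 (ε ^ 6 / 3)
    rw [← hη_def] at h
    linarith
  refine ⟨η ^ 4, by positivity, ?_⟩
  intro V _ G X Y hdisj hunion hbip hd₀le hC4
  unfold IsRegularPair
  intro X' hX'sub Y' hY'sub hX'card hY'card
  set a : V → V → ℝ := fun x y => if G.Adj x y then 1 else 0 with ha_def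
  have ha0 : ∀ x y, 0 ≤ a x y := fun x y => by
    by_cases h : G.Adj x y <;> simp [ha_def, h]
  have ha1 : ∀ x y, a x y ≤ 1 := fun x y => by
    by_cases h : G.Adj x y <;> simp [ha_def, h]
  set m : ℝ := (X.card : ℝ) with hm_def
  set n : ℝ := (Y.card : ℝ) with hn_def
  set d : ℝ := edgeDensityR G X Y with hd_def
  set p : ℝ := (X'.card : ℝ) with hp_def
  set q : ℝ := (Y'.card : ℝ) with hq_def
  have hm0 : (0:ℝ) ≤ m := Nat.cast_nonneg _
  have hn0 : (0:ℝ) ≤ n := Nat.cast_nonneg _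
  have hd_pos : 0 < d := lt_of_lt_of_le hd₀ hd₀le
  have hsum_filter : ∀ (B : Finset V) (x : V),
      (((B.filter fun b => G.Adj x b)).card : ℝ) = ∑ y ∈ B, a x y := by
    intro B x
    rw [Finset.card_filter]
    push_cast
    exact Finset.sum_congr rfl fun y _ => by
      by_cases h : G.Adj x y <;> simp [ha_def, h]
  set e : ℝ := ∑ x ∈ X, ∑ y ∈ Y, a x y with he_def
  have hd_eq : d = e / (m * n) := by
    rw [hd_def, edgeDensityR, he_def]
    congr 1
    exact Finset.sum_congr rfl fun x _ => hsum_filter Y x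
  have hmn : 0 < m * n := by
    rcases (mul_nonneg hm0 hn0).lt_or_eq with h | h
    · exact h
    · exfalso
      rw [hd_eq, ← h, div_zero] at hd_pos
      exact lt_irrefl 0 hd_pos
  have hm_pos : 0 < m := by
    rcases hm0.lt_or_eq with h | h
    · exact h
    · rw [← h, zero_mul] at hmn; exact absurd hmn (lt_irrefl 0)
  have hn_pos : 0 < n := by
    rcases hn0.lt_or_eq with h | h
    · exact h
    · rw [← h, mul_zero] at hmn; exact absurd hmn (lt_irrefl 0)
  have he : e = d * (m * n) := by
    rw [hd_eq]; field_simp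
  have he_le : e ≤ m * n := by
    rw [he_def]
    calc ∑ x ∈ X, ∑ y ∈ Y, a x y ≤ ∑ x ∈ X, n := by
          refine Finset.sum_le_sum fun x _ => ?_
          calc ∑ y ∈ Y, a x y ≤ ∑ y ∈ Y, 1 := Finset.sum_le_sum fun y _ => ha1 x y
            _ = n := by rw [Finset.sum_const, nsmul_eq_mul, mul_one]
      _ = m * n := by rw [Finset.sum_const, nsmul_eq_mul]
  have hd1 : d ≤ 1 := by
    rw [hd_eq]
    exact (div_le_one hmn).mpr he_le
  set deg : V → ℝ := fun x => ∑ y ∈ Y, a x y with hdeg_def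
  set degY : V → ℝ := fun y => ∑ x ∈ X, a x y with hdegY_def
  set cod : V → V → ℝ := fun x x' => ∑ y ∈ Y, a x y * a x' y with hcod_def
  set codY : V → V → ℝ := fun y y' => ∑ x ∈ X, a x y * a x y' with hcodY_def
  -- the codegree rewrite
  have hcod_eq : ∀ x ∈ X, ∀ x' ∈ X,
      ((univ.filter fun v => G.Adj x v ∧ G.Adj x' v).card : ℝ) = cod x x' := by
    intro x hx x' hx'
    have hxY : x ∉ Y := fun h => (Finset.disjoint_left.mp hdisj hx) h
    rw [Finset.card_filter]
    push_cast
    rw [← hunion, Finset.sum_union hdisj]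
    have h1 : ∑ v ∈ X, (if G.Adj x v ∧ G.Adj x' v then (1:ℝ) else 0) = 0 := by
      apply Finset.sum_eq_zero
      intro v hv
      rw [if_neg]
      rintro ⟨hadj, -⟩
      rcases hbip x v hadj with ⟨-, hvY⟩ | ⟨hxY', -⟩
      · exact (Finset.disjoint_left.mp hdisj hv) hvY
      · exact hxY hxY'
    rw [h1, zero_add]
    simp only [hcod_def]
    refine Finset.sum_congr rfl fun v _ => ?_
    by_cases h1' : G.Adj x v <;> by_cases h2' : G.Adj x' v <;> simp [ha_def, h1', h2']
  -- the C4 count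
  set C4 : ℝ := ∑ x ∈ X, ∑ x' ∈ X, cod x x' ^ 2 with hC4_def
  have hC4le : C4 ≤ d ^ 4 * m ^ 2 * n ^ 2 + η ^ 4 * m ^ 2 * n ^ 2 := by
    calc C4 = ∑ x ∈ X, ∑ x' ∈ X,
          ((univ.filter fun v => G.Adj x v ∧ G.Adj x' v).card : ℝ) ^ 2 := by
          rw [hC4_def]
          exact Finset.sum_congr rfl fun x hx => Finset.sum_congr rfl fun x' hx' => by
            rw [hcod_eq x hx x' hx']
      _ ≤ _ := hC4
  -- identities: sum of codegrees over X×X equals sum of squared Y-degrees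
  have hA : ∑ pp ∈ X ×ˢ X, cod pp.1 pp.2 = ∑ y ∈ Y, degY y ^ 2 := by
    rw [Finset.sum_product]
    calc ∑ x ∈ X, ∑ x' ∈ X, cod x x' = ∑ x ∈ X, ∑ y ∈ Y, a x y * degY y := by
          refine Finset.sum_congr rfl fun x _ => ?_
          simp only [hcod_def]
          rw [Finset.sum_comm]
          refine Finset.sum_congr rfl fun y _ => ?_
          simp only [hdegY_def]
          rw [Finset.mul_sum]
      _ = ∑ y ∈ Y, degY y ^ 2 := by
          rw [Finset.sum_comm]
          refine Finset.sum_congr rfl fun y _ => ?_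
          rw [← Finset.sum_mul]
          simp only [hdegY_def]
          rw [sq]
  have hsum_degY : ∑ y ∈ Y, degY y = e := by
    simp only [hdegY_def]
    rw [Finset.sum_comm, he_def]
  have hcardX2 : (((X ×ˢ X).card : ℕ) : ℝ) = m * m := by
    rw [Finset.card_product]; push_cast; rw [← hm_def]
  have hcardY2 : (((Y ×ˢ Y).card : ℕ) : ℝ) = n * n := by
    rw [Finset.card_product]; push_cast; rw [← hn_def]
  have hScod_ge : d ^ 2 * m ^ 2 * n ≤ ∑ pp ∈ X ×ˢ X, cod pp.1 pp.2 := by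
    rw [hA]
    have hCS1 : (∑ y ∈ Y, degY y) ^ 2 ≤ n * ∑ y ∈ Y, degY y ^ 2 := by
      have h := sq_sum_le_card_mul_sum_sq (s := Y) (f := degY)
      rwa [← hn_def] at h
    rw [hsum_degY, he] at hCS1
    have h2 : n * (d ^ 2 * m ^ 2 * n) ≤ n * ∑ y ∈ Y, degY y ^ 2 := by
      have hh : (d * (m * n)) ^ 2 = n * (d ^ 2 * m ^ 2 * n) := by ring
      linarith [hCS1, hh.symm.le, hh.le]
    exact le_of_mul_le_mul_left h2 hn_pos
  have hC4p : ∑ pp ∈ X ×ˢ X, cod pp.1 pp.2 ^ 2 = C4 := by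
    rw [hC4_def, Finset.sum_product]
  have hT1p : ∑ pp ∈ X ×ˢ X, (cod pp.1 pp.2 - d ^ 2 * n) ^ 2 ≤ η ^ 4 * m ^ 2 * n ^ 2 := by
    rw [expand_sq_sum (X ×ˢ X) (fun pp => cod pp.1 pp.2) (d ^ 2 * n)]
    rw [hcardX2, hC4p]
    have hmono : 2 * (d ^ 2 * n) * (d ^ 2 * m ^ 2 * n)
        ≤ 2 * (d ^ 2 * n) * ∑ pp ∈ X ×ˢ X, cod pp.1 pp.2 :=
      mul_le_mul_of_nonneg_left hScod_ge (mul_nonneg (by norm_num) (mul_nonneg (sq_nonneg d) hn0))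
    have hEq : (m * m) * (d ^ 2 * n) ^ 2 = d ^ 4 * m ^ 2 * n ^ 2 := by ring
    have hEq2 : 2 * (d ^ 2 * n) * (d ^ 2 * m ^ 2 * n) = 2 * (d ^ 4 * m ^ 2 * n ^ 2) := by ring
    linarith [hC4le, hmono]
  -- symmetric side
  have hB : ∑ pp ∈ Y ×ˢ Y, codY pp.1 pp.2 = ∑ x ∈ X, deg x ^ 2 := by
    rw [Finset.sum_product]
    calc ∑ y ∈ Y, ∑ y' ∈ Y, codY y y' = ∑ y ∈ Y, ∑ x ∈ X, a x y * deg x := by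
          refine Finset.sum_congr rfl fun y _ => ?_
          simp only [hcodY_def]
          rw [Finset.sum_comm]
          refine Finset.sum_congr rfl fun x _ => ?_
          simp only [hdeg_def]
          rw [Finset.mul_sum]
      _ = ∑ x ∈ X, deg x ^ 2 := by
          rw [Finset.sum_comm]
          refine Finset.sum_congr rfl fun x _ => ?_
          rw [← Finset.sum_mul]
          simp only [hdeg_def]
          rw [sq]
  have hsum_deg : ∑ x ∈ X, deg x = e := by
    simp only [hdeg_def]
    exact he_def.symm
  have hsym : ∑ pp ∈ Y ×ˢ Y, codY pp.1 pp.2 ^ 2 = C4 := by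
    rw [Finset.sum_product]
    calc ∑ y ∈ Y, ∑ y' ∈ Y, codY y y' ^ 2
        = ∑ y ∈ Y, ∑ y' ∈ Y, ∑ x ∈ X, ∑ x' ∈ X,
            (a x y * a x' y) * (a x y' * a x' y') := by
          refine Finset.sum_congr rfl fun y _ => Finset.sum_congr rfl fun y' _ => ?_
          simp only [hcodY_def]
          rw [sq, Finset.sum_mul_sum]
          exact Finset.sum_congr rfl fun x _ => Finset.sum_congr rfl fun x' _ => by ring
      _ = ∑ x ∈ X, ∑ x' ∈ X, ∑ y ∈ Y, ∑ y' ∈ Y,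
            (a x y * a x' y) * (a x y' * a x' y') := sum_swap4 X Y _
      _ = C4 := by
          rw [hC4_def]
          refine Finset.sum_congr rfl fun x _ => Finset.sum_congr rfl fun x' _ => ?_
          simp only [hcod_def]
          rw [sq, Finset.sum_mul_sum]
  have hScodY_ge : d ^ 2 * m * n ^ 2 ≤ ∑ pp ∈ Y ×ˢ Y, codY pp.1 pp.2 := by
    rw [hB]
    have hCS2 : (∑ x ∈ X, deg x) ^ 2 ≤ m * ∑ x ∈ X, deg x ^ 2 := by
      have h := sq_sum_le_card_mul_sum_sq (s := X) (f := deg)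
      rwa [← hm_def] at h
    rw [hsum_deg, he] at hCS2
    have h2 : m * (d ^ 2 * m * n ^ 2) ≤ m * ∑ x ∈ X, deg x ^ 2 := by
      have hh : (d * (m * n)) ^ 2 = m * (d ^ 2 * m * n ^ 2) := by ring
      linarith [hCS2, hh.le, hh.symm.le]
    exact le_of_mul_le_mul_left h2 hm_pos
  have hT2p : ∑ pp ∈ Y ×ˢ Y, (codY pp.1 pp.2 - d ^ 2 * m) ^ 2 ≤ η ^ 4 * m ^ 2 * n ^ 2 := by
    rw [expand_sq_sum (Y ×ˢ Y) (fun pp => codY pp.1 pp.2) (d ^ 2 * m)]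
    rw [hcardY2, hsym]
    have hmono : 2 * (d ^ 2 * m) * (d ^ 2 * m * n ^ 2)
        ≤ 2 * (d ^ 2 * m) * ∑ pp ∈ Y ×ˢ Y, codY pp.1 pp.2 :=
      mul_le_mul_of_nonneg_left hScodY_ge (mul_nonneg (by norm_num) (mul_nonneg (sq_nonneg d) hm0))
    have hEq : (n * n) * (d ^ 2 * m) ^ 2 = d ^ 4 * m ^ 2 * n ^ 2 := by ring
    have hEq2 : 2 * (d ^ 2 * m) * (d ^ 2 * m * n ^ 2) = 2 * (d ^ 4 * m ^ 2 * n ^ 2) := by ring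
    linarith [hC4le, hmono]
  -- degree deviation
  have hdegdev : ∑ x ∈ X, (deg x - d * n) ^ 2 ≤ η ^ 2 * m * n ^ 2 := by
    have hr : ∑ pp ∈ Y ×ˢ Y, (codY pp.1 pp.2 - d ^ 2 * m)
        = (∑ pp ∈ Y ×ˢ Y, codY pp.1 pp.2) - (n * n) * (d ^ 2 * m) := by
      rw [Finset.sum_sub_distrib, Finset.sum_const, nsmul_eq_mul, hcardY2]
    have heq : ∑ x ∈ X, (deg x - d * n) ^ 2
        = ∑ pp ∈ Y ×ˢ Y, (codY pp.1 pp.2 - d ^ 2 * m) := by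
      rw [expand_sq_sum X deg (d * n), hr, hB, hsum_deg, he, ← hm_def]
      ring
    rw [heq]
    calc ∑ pp ∈ Y ×ˢ Y, (codY pp.1 pp.2 - d ^ 2 * m)
        ≤ ∑ pp ∈ Y ×ˢ Y, |codY pp.1 pp.2 - d ^ 2 * m| :=
          Finset.sum_le_sum fun pp _ => le_abs_self _
      _ ≤ η ^ 2 * m * n ^ 2 := by
          refine sum_abs_le_of_sq _ _ _ (mul_nonneg (mul_nonneg (sq_nonneg η) hm0) (sq_nonneg n)) ?_
          rw [hcardY2]
          calc (n * n) * ∑ pp ∈ Y ×ˢ Y, (codY pp.1 pp.2 - d ^ 2 * m) ^ 2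
              ≤ (n * n) * (η ^ 4 * m ^ 2 * n ^ 2) :=
                mul_le_mul_of_nonneg_left hT2p (mul_nonneg hn0 hn0)
            _ = (η ^ 2 * m * n ^ 2) ^ 2 := by ring
  -- absolute codegree deviation over X × X
  have hS1abs : ∑ pp ∈ X ×ˢ X, |cod pp.1 pp.2 - d ^ 2 * n| ≤ η ^ 2 * m ^ 2 * n := by
    refine sum_abs_le_of_sq _ _ _ (mul_nonneg (mul_nonneg (sq_nonneg η) (sq_nonneg m)) hn0) ?_
    rw [hcardX2]
    calc (m * m) * ∑ pp ∈ X ×ˢ X, (cod pp.1 pp.2 - d ^ 2 * n) ^ 2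
        ≤ (m * m) * (η ^ 4 * m ^ 2 * n ^ 2) :=
          mul_le_mul_of_nonneg_left hT1p (mul_nonneg hm0 hm0)
      _ = (η ^ 2 * m ^ 2 * n) ^ 2 := by ring
  -- absolute degree deviation over X
  have hS2abs : ∑ x ∈ X, |d * n - deg x| ≤ η * m * n := by
    refine sum_abs_le_of_sq _ _ _ (mul_nonneg (mul_nonneg hη_pos.le hm0) hn0) ?_
    rw [← hm_def]
    have hflip : ∑ x ∈ X, (d * n - deg x) ^ 2 = ∑ x ∈ X, (deg x - d * n) ^ 2 :=
      Finset.sum_congr rfl fun x _ => by ring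
    rw [hflip]
    calc m * ∑ x ∈ X, (deg x - d * n) ^ 2 ≤ m * (η ^ 2 * m * n ^ 2) :=
          mul_le_mul_of_nonneg_left hdegdev hm0
      _ = (η * m * n) ^ 2 := by ring
  -- now deal with the subset pair
  have hp_pos : 0 < p := lt_of_lt_of_le (mul_pos hε hm_pos) hX'card
  have hq_pos : 0 < q := lt_of_lt_of_le (mul_pos hε hn_pos) hY'card
  have hpm : p ≤ m := by
    rw [hp_def, hm_def]; exact_mod_cast Finset.card_le_card hX'sub
  have hqn : q ≤ n := by
    rw [hq_def, hn_def]; exact_mod_cast Finset.card_le_card hY'sub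
  have hpq_pos : 0 < p * q := mul_pos hp_pos hq_pos
  set e' : ℝ := ∑ x ∈ X', ∑ y ∈ Y', a x y with he'_def
  have hd'_eq : edgeDensityR G X' Y' = e' / (p * q) := by
    rw [edgeDensityR, he'_def, ← hp_def, ← hq_def]
    congr 1
    exact Finset.sum_congr rfl fun x _ => hsum_filter Y' x
  set D : ℝ := e' - d * (p * q) with hD_def
  have hcomm' : ∑ y ∈ Y', ∑ x ∈ X', a x y = e' := by
    rw [he'_def]; exact Finset.sum_comm
  have hDsum : D = ∑ y ∈ Y', ((∑ x ∈ X', a x y) - d * p) := by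
    rw [Finset.sum_sub_distrib, hcomm', Finset.sum_const, nsmul_eq_mul, ← hq_def, hD_def]
    ring
  have hCSD : D ^ 2 ≤ n * ∑ y ∈ Y, ((∑ x ∈ X', a x y) - d * p) ^ 2 := by
    have h1 : D ^ 2 ≤ q * ∑ y ∈ Y', ((∑ x ∈ X', a x y) - d * p) ^ 2 := by
      rw [hDsum]
      have h := sq_sum_le_card_mul_sum_sq (s := Y')
        (f := fun y => (∑ x ∈ X', a x y) - d * p)
      rwa [← hq_def] at h
    have h2 : ∑ y ∈ Y', ((∑ x ∈ X', a x y) - d * p) ^ 2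
        ≤ ∑ y ∈ Y, ((∑ x ∈ X', a x y) - d * p) ^ 2 :=
      Finset.sum_le_sum_of_subset_of_nonneg hY'sub fun y _ _ => sq_nonneg _
    have h3 : (0:ℝ) ≤ ∑ y ∈ Y, ((∑ x ∈ X', a x y) - d * p) ^ 2 :=
      Finset.sum_nonneg fun _ _ => sq_nonneg _
    calc D ^ 2 ≤ q * ∑ y ∈ Y', ((∑ x ∈ X', a x y) - d * p) ^ 2 := h1
      _ ≤ q * ∑ y ∈ Y, ((∑ x ∈ X', a x y) - d * p) ^ 2 :=
          mul_le_mul_of_nonneg_left h2 hq_pos.le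
      _ ≤ n * ∑ y ∈ Y, ((∑ x ∈ X', a x y) - d * p) ^ 2 :=
          mul_le_mul_of_nonneg_right hqn h3
  -- expansion of the inner sum
  have hEL : ∑ y ∈ Y, ((∑ x ∈ X', a x y) - d * p) ^ 2
      = (∑ x ∈ X', ∑ x' ∈ X', cod x x')
        - 2 * (d * p) * (∑ x ∈ X', deg x)
        + (p * p) * (n * d ^ 2) := by
    have h1 : ∀ y, (∑ x ∈ X', a x y) - d * p = ∑ x ∈ X', (a x y - d) := fun y => by
      rw [Finset.sum_sub_distrib, Finset.sum_const, nsmul_eq_mul, ← hp_def]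
      try ring
    have h2 : ∑ y ∈ Y, ((∑ x ∈ X', a x y) - d * p) ^ 2
        = ∑ x ∈ X', ∑ x' ∈ X', ∑ y ∈ Y, (a x y - d) * (a x' y - d) := by
      calc ∑ y ∈ Y, ((∑ x ∈ X', a x y) - d * p) ^ 2
          = ∑ y ∈ Y, ∑ x ∈ X', ∑ x' ∈ X', (a x y - d) * (a x' y - d) := by
            refine Finset.sum_congr rfl fun y _ => ?_
            rw [h1 y, sq, Finset.sum_mul_sum]
        _ = ∑ x ∈ X', ∑ y ∈ Y, ∑ x' ∈ X', (a x y - d) * (a x' y - d) := Finset.sum_comm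
        _ = ∑ x ∈ X', ∑ x' ∈ X', ∑ y ∈ Y, (a x y - d) * (a x' y - d) :=
            Finset.sum_congr rfl fun x _ => Finset.sum_comm
    have hinner : ∀ x x', ∑ y ∈ Y, (a x y - d) * (a x' y - d)
        = cod x x' - d * deg x - d * deg x' + n * d ^ 2 := by
      intro x x'
      have ht : ∀ y ∈ Y, (a x y - d) * (a x' y - d)
          = (a x y * a x' y - d * a x y - d * a x' y) + d ^ 2 := fun y _ => by ring
      rw [Finset.sum_congr rfl ht, Finset.sum_add_distrib, Finset.sum_sub_distrib,
        Finset.sum_sub_distrib, Finset.sum_const, nsmul_eq_mul, ← hn_def,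
        ← Finset.mul_sum, ← Finset.mul_sum]
      try simp only [hcod_def, hdeg_def]
      try ring
    have hSd : ∀ x, ∑ x' ∈ X', (cod x x' - d * deg x - d * deg x' + n * d ^ 2)
        = (∑ x' ∈ X', cod x x') - (p * d) * deg x - d * (∑ x' ∈ X', deg x')
          + p * (n * d ^ 2) := by
      intro x
      rw [Finset.sum_add_distrib, Finset.sum_sub_distrib, Finset.sum_sub_distrib,
        Finset.sum_const, Finset.sum_const, nsmul_eq_mul, nsmul_eq_mul, ← hp_def,
        ← Finset.mul_sum]
      ring
    rw [h2]
    rw [Finset.sum_congr rfl fun x _ => Finset.sum_congr rfl fun x' _ => hinner x x']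
    rw [Finset.sum_congr rfl fun x _ => hSd x]
    rw [Finset.sum_add_distrib, Finset.sum_sub_distrib, Finset.sum_sub_distrib,
      Finset.sum_const, Finset.sum_const, nsmul_eq_mul, nsmul_eq_mul, ← hp_def,
      ← Finset.mul_sum]
    ring
  -- codegree deviation bound on the subset
  have hS1b : (∑ x ∈ X', ∑ x' ∈ X', cod x x') - (p * p) * (d ^ 2 * n)
      ≤ η ^ 2 * m ^ 2 * n := by
    have e1 : (∑ x ∈ X', ∑ x' ∈ X', cod x x') - (p * p) * (d ^ 2 * n)
        = ∑ pp ∈ X' ×ˢ X', (cod pp.1 pp.2 - d ^ 2 * n) := by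
      rw [Finset.sum_sub_distrib, Finset.sum_product, Finset.sum_const, nsmul_eq_mul,
        Finset.card_product]
      push_cast
      rw [← hp_def]
    rw [e1]
    calc ∑ pp ∈ X' ×ˢ X', (cod pp.1 pp.2 - d ^ 2 * n)
        ≤ ∑ pp ∈ X' ×ˢ X', |cod pp.1 pp.2 - d ^ 2 * n| :=
          Finset.sum_le_sum fun pp _ => le_abs_self _
      _ ≤ ∑ pp ∈ X ×ˢ X, |cod pp.1 pp.2 - d ^ 2 * n| :=
          Finset.sum_le_sum_of_subset_of_nonneg
            (Finset.product_subset_product hX'sub hX'sub) fun pp _ _ => abs_nonneg _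
      _ ≤ η ^ 2 * m ^ 2 * n := hS1abs
  -- degree deviation bound on the subset
  have hS2b : d * n * p - (∑ x ∈ X', deg x) ≤ η * m * n := by
    have e2 : d * n * p - (∑ x ∈ X', deg x) = ∑ x ∈ X', (d * n - deg x) := by
      rw [Finset.sum_sub_distrib, Finset.sum_const, nsmul_eq_mul, ← hp_def]
      ring
    rw [e2]
    calc ∑ x ∈ X', (d * n - deg x) ≤ ∑ x ∈ X', |d * n - deg x| :=
          Finset.sum_le_sum fun x _ => le_abs_self _
      _ ≤ ∑ x ∈ X, |d * n - deg x| :=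
          Finset.sum_le_sum_of_subset_of_nonneg hX'sub fun x _ _ => abs_nonneg _
      _ ≤ η * m * n := hS2abs
  -- assemble
  clear_value a m n d p q e deg degY cod codY C4 e' D η
  have hdp0 : (0:ℝ) ≤ 2 * d * p :=
    mul_nonneg (mul_nonneg (by norm_num) hd_pos.le) hp_pos.le
  have hS2b' : 2 * d * p * (d * n * p - (∑ x ∈ X', deg x)) ≤ 2 * d * p * (η * m * n) :=
    mul_le_mul_of_nonneg_left hS2b hdp0
  have hsum_le : ∑ y ∈ Y, ((∑ x ∈ X', a x y) - d * p) ^ 2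
      ≤ η ^ 2 * m ^ 2 * n + 2 * d * p * (η * m * n) := by
    have c1 : (∑ x ∈ X', ∑ x' ∈ X', cod x x')
        - 2 * (d * p) * (∑ x ∈ X', deg x) + (p * p) * (n * d ^ 2)
        = ((∑ x ∈ X', ∑ x' ∈ X', cod x x') - (p * p) * (d ^ 2 * n))
          + 2 * d * p * (d * n * p - (∑ x ∈ X', deg x)) := by ring
    rw [hEL, c1]
    exact add_le_add hS1b hS2b'
  have hD2 : D ^ 2 ≤ n * (η ^ 2 * m ^ 2 * n + 2 * d * p * (η * m * n)) :=
    hCSD.trans (mul_le_mul_of_nonneg_left hsum_le hn0)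
  have hη2 : η ^ 2 ≤ η := by
    calc η ^ 2 = η * η := sq η
      _ ≤ 1 * η := mul_le_mul_of_nonneg_right hη1 hη_pos.le
      _ = η := one_mul η
  have hdpm : d * p ≤ m := by
    calc d * p ≤ 1 * p := mul_le_mul_of_nonneg_right hd1 hp_pos.le
      _ = p := one_mul p
      _ ≤ m := hpm
  have h1 : n * (η ^ 2 * m ^ 2 * n + 2 * d * p * (η * m * n)) ≤ 3 * η * m ^ 2 * n ^ 2 := by
    have a1 : η ^ 2 * (m ^ 2 * n ^ 2) ≤ η * (m ^ 2 * n ^ 2) :=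
      mul_le_mul_of_nonneg_right hη2 (mul_nonneg (sq_nonneg m) (sq_nonneg n))
    have a2 : (d * p) * (η * m * n ^ 2) ≤ m * (η * m * n ^ 2) :=
      mul_le_mul_of_nonneg_right hdpm
        (mul_nonneg (mul_nonneg hη_pos.le hm0) (sq_nonneg n))
    calc n * (η ^ 2 * m ^ 2 * n + 2 * d * p * (η * m * n))
        = η ^ 2 * (m ^ 2 * n ^ 2) + 2 * ((d * p) * (η * m * n ^ 2)) := by ring
      _ ≤ η * (m ^ 2 * n ^ 2) + 2 * (m * (η * m * n ^ 2)) :=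
          add_le_add a1 (mul_le_mul_of_nonneg_left a2 (by norm_num))
      _ = 3 * η * m ^ 2 * n ^ 2 := by ring
  have h2 : 3 * η * m ^ 2 * n ^ 2 ≤ ε ^ 6 * m ^ 2 * n ^ 2 := by
    calc 3 * η * m ^ 2 * n ^ 2 = (3 * η) * (m ^ 2 * n ^ 2) := by ring
      _ ≤ ε ^ 6 * (m ^ 2 * n ^ 2) :=
          mul_le_mul_of_nonneg_right hη3 (mul_nonneg (sq_nonneg m) (sq_nonneg n))
      _ = ε ^ 6 * m ^ 2 * n ^ 2 := by ring
  have h3 : ε ^ 6 * m ^ 2 * n ^ 2 ≤ (ε * (p * q)) ^ 2 := by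
    have hpp : (ε * m) ^ 2 ≤ p ^ 2 :=
      pow_le_pow_left₀ (mul_nonneg hε.le hm0) hX'card 2
    have hqq : (ε * n) ^ 2 ≤ q ^ 2 :=
      pow_le_pow_left₀ (mul_nonneg hε.le hn0) hY'card 2
    have h4 : (ε * m) ^ 2 * (ε * n) ^ 2 ≤ p ^ 2 * q ^ 2 :=
      mul_le_mul hpp hqq (by positivity) (by positivity)
    calc ε ^ 6 * m ^ 2 * n ^ 2 = ε ^ 2 * ((ε * m) ^ 2 * (ε * n) ^ 2) := by ring
      _ ≤ ε ^ 2 * (p ^ 2 * q ^ 2) := mul_le_mul_of_nonneg_left h4 (sq_nonneg ε)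
      _ = (ε * (p * q)) ^ 2 := by ring
  have hfinal : D ^ 2 ≤ (ε * (p * q)) ^ 2 := hD2.trans (h1.trans (h2.trans h3))
  have habs : |D| ≤ ε * (p * q) :=
    le_of_sq_le_sq'' (by rw [sq_abs]; exact hfinal) (abs_nonneg _)
      (mul_pos hε hpq_pos).le
  rw [hd'_eq]
  have hfrac : e' / (p * q) - d = D / (p * q) := by
    rw [hD_def, sub_div, mul_div_cancel_right₀ _ hpq_pos.ne']
  rw [hfrac, abs_div, abs_of_pos hpq_pos, div_le_iff₀ hpq_pos]
  exact habs
end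

section
/- Let k ≥ 2 be an integer and α > 0, and let R be a graph on m vertices with minimum degree at least (1/(k+1) + α/4)m, where m > 4/α. Then the vertex set of R can be partitioned into vertex-disjoint stars of R, each consisting of a center vertex together with at least 1 and at most k leaves, every leaf being adjacent in R to its center. -/
open Finset
open scoped Classical

variable {V : Type} [Fintype V] [DecidableEq V]

/-- The set of leaves of a (potential) center `u` under the assignment `f`. -/
def SPleaves (f : V → V) (u : V) : Finset V := univ.filter fun v => v ≠ u ∧ f v = u

/-- `f` is a good partial star assignment for `R` with at most `k` leaves per star. -/
def SPgood (R : SimpleGraph V) (k : ℕ) (f : V → V) : Prop :=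
  (∀ v, f (f v) = f v) ∧ (∀ v, f v ≠ v → R.Adj v (f v)) ∧
    ∀ u, f u = u → (SPleaves f u).card ≤ k

/-- The set of singleton centers: fixed points with no leaves. -/
def SPsing (f : V → V) : Finset V := univ.filter fun u => f u = u ∧ SPleaves f u = ∅

lemma mem_SPleaves {f : V → V} {u y : V} : y ∈ SPleaves f u ↔ y ≠ u ∧ f y = u := by
  simp [SPleaves]

lemma mem_SPsing {f : V → V} {x : V} : x ∈ SPsing f ↔ f x = x ∧ SPleaves f x = ∅ := by
  simp [SPsing]
/-- The descent step: given a singleton center `v` with a neighbor `w` that is not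
a full center, we can improve the assignment, strictly shrinking the singleton set. -/
lemma SPdescent {R : SimpleGraph V} {k : ℕ} (hk : 2 ≤ k) {f : V → V} (hf : SPgood R k f)
    {v w : V} (hv : f v = v) (hvl : SPleaves f v = ∅) (hadj : R.Adj v w)
    (hw : ¬ (f w = w ∧ (SPleaves f w).card = k)) :
    ∃ g : V → V, SPgood R k g ∧ SPsing g ⊆ (SPsing f).erase v := by
  obtain ⟨hid, hadjf, hcard⟩ := hf
  have hwv : w ≠ v := hadj.ne'
  have hto_v : ∀ y, f y = v → y = v := by
    intro y hy
    by_contra hne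
    have hmem : y ∈ SPleaves f v := mem_SPleaves.mpr ⟨hne, hy⟩
    rw [hvl] at hmem
    exact absurd hmem (Finset.notMem_empty y)
  have hfne_v : ∀ x, x ≠ v → f x ≠ v := fun x hx h => hx (hto_v x h)
  by_cases hwc : f w = w
  · -- Case B : `w` is a non-full center; attach `v` as a new leaf of `w`.
    have hcw : (SPleaves f w).card < k :=
      lt_of_le_of_ne (hcard w hwc) fun h => hw ⟨hwc, h⟩
    set g : V → V := fun x => if x = v then w else f x with hgdef
    have hgv : g v = w := by simp [hgdef]
    have hgne : ∀ x, x ≠ v → g x = f x := by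
      intro x hx; simp [hgdef, hx]
    refine ⟨g, ⟨?_, ?_, ?_⟩, ?_⟩
    · intro x
      by_cases hx : x = v
      · rw [hx, hgv, hgne w hwv]
        exact hwc
      · rw [hgne x hx, hgne (f x) (hfne_v x hx)]
        exact hid x
    · intro x hne
      by_cases hx : x = v
      · rw [hx, hgv]
        exact hadj
      · rw [hgne x hx] at hne ⊢
        exact hadjf x hne
    · intro u hu
      by_cases huw : u = w
      · rw [huw]
        have hsub : SPleaves g w ⊆ insert v (SPleaves f w) := by
          intro y hy
          obtain ⟨hyw, hyg⟩ := mem_SPleaves.mp hy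
          by_cases hyv : y = v
          · exact Finset.mem_insert.mpr (Or.inl hyv)
          · rw [hgne y hyv] at hyg
            exact Finset.mem_insert.mpr (Or.inr (mem_SPleaves.mpr ⟨hyw, hyg⟩))
        calc (SPleaves g w).card ≤ (insert v (SPleaves f w)).card :=
              Finset.card_le_card hsub
          _ ≤ (SPleaves f w).card + 1 := Finset.card_insert_le _ _
          _ ≤ k := hcw
      · have huv : u ≠ v := by
          intro h; rw [h, hgv] at hu; exact hwv hu
        have hu' : f u = u := by rw [← hgne u huv]; exact hu
        have hsub : SPleaves g u ⊆ SPleaves f u := by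
          intro y hy
          obtain ⟨hyu, hyg⟩ := mem_SPleaves.mp hy
          by_cases hyv : y = v
          · rw [hyv, hgv] at hyg
            exact absurd hyg.symm huw
          · rw [hgne y hyv] at hyg
            exact mem_SPleaves.mpr ⟨hyu, hyg⟩
        exact le_trans (Finset.card_le_card hsub) (hcard u hu')
    · intro x hx
      obtain ⟨hgxx, hlx⟩ := mem_SPsing.mp hx
      have hxv : x ≠ v := by
        intro h; rw [h, hgv] at hgxx; exact hwv hgxx
      have hxw : x ≠ w := by
        intro h
        have hvm : v ∈ SPleaves g x :=
          mem_SPleaves.mpr ⟨by rw [h]; exact hadj.ne, by rw [h]; exact hgv⟩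
        rw [hlx] at hvm
        exact Finset.notMem_empty v hvm
      have hfx : f x = x := by rw [← hgne x hxv]; exact hgxx
      have hsub2 : SPleaves f x ⊆ SPleaves g x := by
        intro y hy
        obtain ⟨hyx, hyf⟩ := mem_SPleaves.mp hy
        have hyv : y ≠ v := by
          intro h; rw [h, hv] at hyf; exact hxv hyf.symm
        exact mem_SPleaves.mpr ⟨hyx, by rw [hgne y hyv]; exact hyf⟩
      have hfl : SPleaves f x = ∅ := Finset.subset_empty.mp (hlx ▸ hsub2)
      exact Finset.mem_erase.mpr ⟨hxv, mem_SPsing.mpr ⟨hfx, hfl⟩⟩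
  · -- Case A : `w` is a leaf of some center `c = f w`.
    obtain ⟨c, hc⟩ : ∃ c, f w = c := ⟨f w, rfl⟩
    have hcc : f c = c := by rw [← hc]; exact hid w
    have hcw_ne : c ≠ w := by
      intro h; apply hwc; rw [hc]; exact h
    have hcv : c ≠ v := by
      intro h; exact hwv (hto_v w (hc.trans h))
    have hadjwc : R.Adj w c := by
      have h := hadjf w hwc
      rwa [hc] at h
    have hfne_w : ∀ x, f x ≠ w := by
      intro x h
      have h2 := hid x
      rw [h] at h2
      exact hwc h2
    have hwinc : w ∈ SPleaves f c :=
      mem_SPleaves.mpr ⟨fun h => hcw_ne h.symm, hc⟩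
    by_cases hone : SPleaves f c = {w}
    · -- Case A2 : `w` is the unique leaf of the pair `(c, w)`.
      -- New star: center `w`, leaves `v` and `c`.  Uses `2 ≤ k`.
      set g : V → V := fun x => if x = v ∨ x = w ∨ x = c then w else f x with hgdef
      have hgv : g v = w := by simp [hgdef]
      have hgw : g w = w := by simp [hgdef]
      have hgc : g c = w := by simp [hgdef]
      have hgne : ∀ x, x ≠ v → x ≠ w → x ≠ c → g x = f x := by
        intro x h1 h2 h3; simp [hgdef, h1, h2, h3]
      have hfx3 : ∀ x, x ≠ v → x ≠ w → x ≠ c → f x ≠ v ∧ f x ≠ w ∧ f x ≠ c := by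
        intro x h1 h2 h3
        refine ⟨hfne_v x h1, hfne_w x, ?_⟩
        intro hxc
        have hmem : x ∈ SPleaves f c := mem_SPleaves.mpr ⟨h3, hxc⟩
        rw [hone] at hmem
        exact h2 (Finset.mem_singleton.mp hmem)
      refine ⟨g, ⟨?_, ?_, ?_⟩, ?_⟩
      · intro x
        by_cases h1 : x = v
        · simp only [h1, hgv, hgw]
        · by_cases h2 : x = w
          · simp only [h2, hgw]
          · by_cases h3 : x = c
            · simp only [h3, hgc, hgw]
            · obtain ⟨n1, n2, n3⟩ := hfx3 x h1 h2 h3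
              rw [hgne x h1 h2 h3, hgne (f x) n1 n2 n3]
              exact hid x
      · intro x hne
        by_cases h1 : x = v
        · rw [h1, hgv]; exact hadj
        · by_cases h2 : x = w
          · rw [h2, hgw] at hne; exact absurd rfl hne
          · by_cases h3 : x = c
            · rw [h3, hgc]; exact hadjwc.symm
            · rw [hgne x h1 h2 h3] at hne ⊢
              exact hadjf x hne
      · intro u hu
        by_cases huw : u = w
        · rw [huw]
          have hsub : SPleaves g w ⊆ {v, c} := by
            intro y hy
            obtain ⟨hyw, hyg⟩ := mem_SPleaves.mp hy
            by_cases hyv : y = v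
            · simp [hyv]
            · by_cases hyc : y = c
              · simp [hyc]
              · rw [hgne y hyv hyw hyc] at hyg
                exact absurd hyg (hfne_w y)
          calc (SPleaves g w).card ≤ ({v, c} : Finset V).card :=
                Finset.card_le_card hsub
            _ ≤ 2 := le_trans (Finset.card_insert_le _ _) (by simp)
            _ ≤ k := hk
        · have huv : u ≠ v := by
            intro h; rw [h, hgv] at hu; exact hwv hu
          have huc : u ≠ c := by
            intro h; rw [h, hgc] at hu; exact hcw_ne hu.symm
          have hu' : f u = u := by rw [← hgne u huv huw huc]; exact hu
          have hsub : SPleaves g u ⊆ SPleaves f u := by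
            intro y hy
            obtain ⟨hyu, hyg⟩ := mem_SPleaves.mp hy
            by_cases hyv : y = v
            · rw [hyv, hgv] at hyg; exact absurd hyg.symm huw
            · by_cases hyw : y = w
              · rw [hyw, hgw] at hyg; exact absurd hyg.symm huw
              · by_cases hyc : y = c
                · rw [hyc, hgc] at hyg; exact absurd hyg.symm huw
                · rw [hgne y hyv hyw hyc] at hyg
                  exact mem_SPleaves.mpr ⟨hyu, hyg⟩
          exact le_trans (Finset.card_le_card hsub) (hcard u hu')
      · intro x hx
        obtain ⟨hgxx, hlx⟩ := mem_SPsing.mp hx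
        have hxv : x ≠ v := by
          intro h; rw [h, hgv] at hgxx; exact hwv hgxx
        have hxw : x ≠ w := by
          intro h
          have hvm : v ∈ SPleaves g x :=
            mem_SPleaves.mpr ⟨by rw [h]; exact hadj.ne, by rw [h]; exact hgv⟩
          rw [hlx] at hvm
          exact Finset.notMem_empty v hvm
        have hxc : x ≠ c := by
          intro h; rw [h, hgc] at hgxx; exact hcw_ne hgxx.symm
        have hfx : f x = x := by rw [← hgne x hxv hxw hxc]; exact hgxx
        have hsub2 : SPleaves f x ⊆ SPleaves g x := by
          intro y hy
          obtain ⟨hyx, hyf⟩ := mem_SPleaves.mp hy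
          have hyv : y ≠ v := by
            intro h; rw [h, hv] at hyf; exact hxv hyf.symm
          have hyw : y ≠ w := by
            intro h; rw [h, hc] at hyf; exact hxc hyf.symm
          have hyc : y ≠ c := by
            intro h; rw [h, hcc] at hyf; exact hxc hyf.symm
          exact mem_SPleaves.mpr ⟨hyx, by rw [hgne y hyv hyw hyc]; exact hyf⟩
        have hfl : SPleaves f x = ∅ := Finset.subset_empty.mp (hlx ▸ hsub2)
        exact Finset.mem_erase.mpr ⟨hxv, mem_SPsing.mpr ⟨hfx, hfl⟩⟩
    · -- Case A1 : `w` is a leaf of a star with at least two leaves.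
      -- New star: center `w`, leaf `v`.
      obtain ⟨w', hw'mem, hw'ne⟩ : ∃ w' ∈ SPleaves f c, w' ≠ w := by
        by_contra hcon
        push_neg at hcon
        exact hone (Finset.eq_singleton_iff_unique_mem.mpr ⟨hwinc, hcon⟩)
      obtain ⟨hw'c, hw'f⟩ := mem_SPleaves.mp hw'mem
      have hw'v : w' ≠ v := by
        intro h
        rw [h, hv] at hw'f
        exact hcv hw'f.symm
      set g : V → V := fun x => if x = v ∨ x = w then w else f x with hgdef
      have hgv : g v = w := by simp [hgdef]
      have hgw : g w = w := by simp [hgdef]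
      have hgne : ∀ x, x ≠ v → x ≠ w → g x = f x := by
        intro x h1 h2; simp [hgdef, h1, h2]
      refine ⟨g, ⟨?_, ?_, ?_⟩, ?_⟩
      · intro x
        by_cases h1 : x = v
        · simp only [h1, hgv, hgw]
        · by_cases h2 : x = w
          · simp only [h2, hgw]
          · rw [hgne x h1 h2, hgne (f x) (hfne_v x h1) (hfne_w x)]
            exact hid x
      · intro x hne
        by_cases h1 : x = v
        · rw [h1, hgv]; exact hadj
        · by_cases h2 : x = w
          · rw [h2, hgw] at hne; exact absurd rfl hne
          · rw [hgne x h1 h2] at hne ⊢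
            exact hadjf x hne
      · intro u hu
        by_cases huw : u = w
        · rw [huw]
          have hsub : SPleaves g w ⊆ {v} := by
            intro y hy
            obtain ⟨hyw, hyg⟩ := mem_SPleaves.mp hy
            by_cases hyv : y = v
            · simp [hyv]
            · rw [hgne y hyv hyw] at hyg
              exact absurd hyg (hfne_w y)
          calc (SPleaves g w).card ≤ ({v} : Finset V).card :=
                Finset.card_le_card hsub
            _ = 1 := Finset.card_singleton v
            _ ≤ k := le_trans (by norm_num) hk
        · have huv : u ≠ v := by
            intro h; rw [h, hgv] at hu; exact hwv hu
          have hu' : f u = u := by rw [← hgne u huv huw]; exact hu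
          have hsub : SPleaves g u ⊆ SPleaves f u := by
            intro y hy
            obtain ⟨hyu, hyg⟩ := mem_SPleaves.mp hy
            by_cases hyv : y = v
            · rw [hyv, hgv] at hyg; exact absurd hyg.symm huw
            · by_cases hyw : y = w
              · rw [hyw, hgw] at hyg; exact absurd hyg.symm huw
              · rw [hgne y hyv hyw] at hyg
                exact mem_SPleaves.mpr ⟨hyu, hyg⟩
          exact le_trans (Finset.card_le_card hsub) (hcard u hu')
      · intro x hx
        obtain ⟨hgxx, hlx⟩ := mem_SPsing.mp hx
        have hxv : x ≠ v := by
          intro h; rw [h, hgv] at hgxx; exact hwv hgxx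
        have hxw : x ≠ w := by
          intro h
          have hvm : v ∈ SPleaves g x :=
            mem_SPleaves.mpr ⟨by rw [h]; exact hadj.ne, by rw [h]; exact hgv⟩
          rw [hlx] at hvm
          exact Finset.notMem_empty v hvm
        have hxc : x ≠ c := by
          intro h
          have hvm : w' ∈ SPleaves g x :=
            mem_SPleaves.mpr ⟨by rw [h]; exact hw'c,
              by rw [h, hgne w' hw'v hw'ne]; exact hw'f⟩
          rw [hlx] at hvm
          exact Finset.notMem_empty w' hvm
        have hfx : f x = x := by rw [← hgne x hxv hxw]; exact hgxx
        have hsub2 : SPleaves f x ⊆ SPleaves g x := by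
          intro y hy
          obtain ⟨hyx, hyf⟩ := mem_SPleaves.mp hy
          have hyv : y ≠ v := by
            intro h; rw [h, hv] at hyf; exact hxv hyf.symm
          have hyw : y ≠ w := by
            intro h; rw [h, hc] at hyf; exact hxc hyf.symm
          exact mem_SPleaves.mpr ⟨hyx, by rw [hgne y hyv hyw]; exact hyf⟩
        have hfl : SPleaves f x = ∅ := Finset.subset_empty.mp (hlx ▸ hsub2)
        exact Finset.mem_erase.mpr ⟨hxv, mem_SPsing.mpr ⟨hfx, hfl⟩⟩

theorem star_partition (k : ℕ) (hk : 2 ≤ k) (α : ℝ) (hα : 0 < α)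
    (V : Type) [Fintype V] [DecidableEq V] (R : SimpleGraph V) (m : ℕ)
    (hm : Fintype.card V = m) (hmα : 4 / α < (m : ℝ))
    (hdeg : ∀ v : V,
      (1 / ((k : ℝ) + 1) + α / 4) * m ≤ ((univ.filter fun u => R.Adj v u).card : ℝ)) :
    -- `f` assigns to each vertex the center of its star: centers are the fixed
    -- points of `f`, every leaf is adjacent to its center, and every center has
    -- at least `1` and at most `k` leaves.
    ∃ f : V → V,
      (∀ v : V, f (f v) = f v) ∧
      (∀ v : V, f v ≠ v → R.Adj v (f v)) ∧
      (∀ u : V, f u = u →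
        1 ≤ (univ.filter fun v => v ≠ u ∧ f v = u).card ∧
        (univ.filter fun v => v ≠ u ∧ f v = u).card ≤ k) := by
  have hα4 : (0:ℝ) < 4/α := by positivity
  have hm0 : (0:ℝ) < m := lt_trans hα4 hmα
  have hk1 : (0:ℝ) < (k:ℝ) + 1 := by positivity
  -- Every vertex has a neighbor which is not a full center.
  have nonfull : ∀ (f : V → V), (∀ u, f u = u → (SPleaves f u).card ≤ k) → ∀ v : V,
      ∃ w, R.Adj v w ∧ ¬ (f w = w ∧ (SPleaves f w).card = k) := by
    intro f hcard v
    by_contra hcon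
    push_neg at hcon
    set F : Finset V := univ.filter (fun u => f u = u ∧ (SPleaves f u).card = k) with hF
    have hsub : (univ.filter fun u => R.Adj v u) ⊆ F := by
      intro u hu
      rw [mem_filter] at hu
      rw [hF, mem_filter]
      exact ⟨mem_univ u, hcon u hu.2⟩
    have hdisj : ∀ x ∈ F, ∀ y ∈ F, x ≠ y →
        Disjoint (insert x (SPleaves f x)) (insert y (SPleaves f y)) := by
      intro x hx y hy hxy
      rw [Finset.disjoint_left]
      intro a hax hay
      rw [hF, mem_filter] at hx hy
      apply hxy
      have h1 : f a = x := by
        rcases Finset.mem_insert.mp hax with h | h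
        · rw [h]; exact hx.2.1
        · exact (mem_SPleaves.mp h).2
      have h2 : f a = y := by
        rcases Finset.mem_insert.mp hay with h | h
        · rw [h]; exact hy.2.1
        · exact (mem_SPleaves.mp h).2
      rw [← h1, h2]
    have hcount : F.card * (k+1) ≤ m := by
      have h1 : (F.biUnion fun u => insert u (SPleaves f u)).card =
          ∑ u ∈ F, (insert u (SPleaves f u)).card := Finset.card_biUnion hdisj
      have h2 : ∀ u ∈ F, (insert u (SPleaves f u)).card = k + 1 := by
        intro u hu
        rw [hF, mem_filter] at hu
        rw [Finset.card_insert_of_notMem (by simp [mem_SPleaves]), hu.2.2]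
      calc F.card * (k+1) = ∑ _u ∈ F, (k+1) := by
            rw [Finset.sum_const, smul_eq_mul]
        _ = ∑ u ∈ F, (insert u (SPleaves f u)).card := (Finset.sum_congr rfl h2).symm
        _ = (F.biUnion fun u => insert u (SPleaves f u)).card := h1.symm
        _ ≤ Fintype.card V := Finset.card_le_univ _
        _ = m := hm
    have hdv := hdeg v
    have hNF : ((univ.filter fun u => R.Adj v u).card : ℝ) ≤ F.card := by
      exact_mod_cast Finset.card_le_card hsub
    have hFm : (F.card : ℝ) * ((k:ℝ)+1) ≤ m := by exact_mod_cast hcount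
    have h1 : (1/((k:ℝ)+1)) * ((k:ℝ)+1) = 1 := by field_simp
    nlinarith [mul_le_mul_of_nonneg_right (hdv.trans hNF) (le_of_lt hk1),
      mul_pos (mul_pos (by linarith : (0:ℝ) < α/4) hm0) hk1]
  -- Descent on the number of singleton centers.
  have main : ∀ n (f : V → V), SPgood R k f → (SPsing f).card ≤ n →
      ∃ g, SPgood R k g ∧ SPsing g = ∅ := by
    intro n
    induction n with
    | zero =>
      intro f hf hle
      exact ⟨f, hf, Finset.card_eq_zero.mp (Nat.le_zero.mp hle)⟩
    | succ n ih =>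
      intro f hf hle
      rcases Finset.eq_empty_or_nonempty (SPsing f) with h0 | ⟨v, hv⟩
      · exact ⟨f, hf, h0⟩
      · have hv' := mem_SPsing.mp hv
        obtain ⟨w, hadj, hw⟩ := nonfull f hf.2.2 v
        obtain ⟨g, hg, hsubg⟩ := SPdescent hk hf hv'.1 hv'.2 hadj hw
        apply ih g hg
        have h1 : (SPsing g).card ≤ ((SPsing f).erase v).card := Finset.card_le_card hsubg
        have h2 : ((SPsing f).erase v).card < (SPsing f).card := Finset.card_erase_lt_of_mem hv
        omega
  have hidgood : SPgood R k (id : V → V) := by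
    refine ⟨fun v => rfl, fun v hv => absurd rfl hv, fun u _ => ?_⟩
    have : SPleaves (id : V → V) u = ∅ := by
      rw [Finset.eq_empty_iff_forall_notMem]
      intro y hy
      obtain ⟨h1, h2⟩ := mem_SPleaves.mp hy
      exact h1 h2
    rw [this]
    simp
  obtain ⟨f, hf, hempty⟩ := main (SPsing (id : V → V)).card id hidgood le_rfl
  refine ⟨f, hf.1, hf.2.1, fun u hu => ⟨?_, hf.2.2 u hu⟩⟩
  have hnot : u ∉ SPsing f := by rw [hempty]; exact Finset.notMem_empty u
  rw [mem_SPsing] at hnot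
  push_neg at hnot
  have hne : SPleaves f u ≠ ∅ := (hnot hu).ne_empty
  have hpos := Finset.card_pos.mpr (Finset.nonempty_of_ne_empty hne)
  exact hpos
end

section
/- Let k ≥ 2 be an integer, α > 0, and m a positive integer with m > 4/α. Let B be a bipartite graph with parts H and U such that every vertex u ∈ U has degree at least (1/(k+1) + α/4)m in B, and such that |U| + 2|H| ≤ m. Then B contains a spanning subgraph in which every vertex of U has degree exactly 1 and every vertex of H has degree at most k − 1. -/
open Finset
open scoped Classical

theorem star_assignment_subgraph (k : ℕ) (hk : 2 ≤ k) (α : ℝ) (hα : 0 < α)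
    (m : ℕ) (hmα : 4 / α < (m : ℝ))
    (V : Type) [Fintype V] [DecidableEq V] (B : SimpleGraph V) (Hs Us : Finset V)
    (hdisj : Disjoint Hs Us) (hcover : Hs ∪ Us = univ)
    (hbip : ∀ u v : V, B.Adj u v → (u ∈ Hs ↔ v ∈ Us))
    (hdeg : ∀ u ∈ Us,
      (1 / ((k : ℝ) + 1) + α / 4) * m ≤ ((univ.filter fun w => B.Adj u w).card : ℝ))
    (hsize : Us.card + 2 * Hs.card ≤ m) :
    ∃ B' : SimpleGraph V, B' ≤ B ∧
      (∀ u ∈ Us, (univ.filter fun w => B'.Adj u w).card = 1) ∧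
      (∀ h ∈ Hs, (univ.filter fun w => B'.Adj h w).card ≤ k - 1) := by
  have hk1 : 1 ≤ k := by omega
  have key : ∀ S : Finset V, S ⊆ Us → ∃ f : V → V,
      (∀ u ∈ S, B.Adj u (f u)) ∧ ∀ h : V, (S.filter fun x => f x = h).card ≤ k - 1 := by
    intro S
    induction S using Finset.strongInduction with
    | _ S ih =>
      intro hSU
      rcases S.eq_empty_or_nonempty with rfl | ⟨u, hu⟩
      · exact ⟨id, by simp, fun h => by simp⟩
      · obtain ⟨f, hf1, hf2⟩ := ih (S.erase u) (Finset.erase_ssubset hu)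
          ((Finset.erase_subset _ _).trans hSU)
        set T := S.erase u with hTdef
        set N := univ.filter (fun w => B.Adj u w) with hNdef
        set Full := univ.filter (fun h => k - 1 ≤ (T.filter fun x => f x = h).card) with hFulldef
        have hA : Full.card * (k - 1) ≤ T.card := by
          calc Full.card * (k - 1) = Full.card • (k - 1) := by rw [smul_eq_mul]
            _ ≤ ∑ h ∈ Full, (T.filter fun x => f x = h).card :=
                Finset.card_nsmul_le_sum _ _ _ (fun h hh => (mem_filter.mp hh).2)
            _ ≤ ∑ h ∈ univ, (T.filter fun x => f x = h).card :=
                Finset.sum_le_sum_of_subset (subset_univ _)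
            _ = T.card := (Finset.card_eq_sum_card_fiberwise (fun x _ => mem_univ (f x))).symm
        have hT1 : T.card + 1 ≤ Us.card := by
          have h1 : T.card + 1 = S.card := by
            rw [hTdef]; exact Finset.card_erase_add_one hu
          have h2 := Finset.card_le_card hSU
          omega
        have hNH : N ⊆ Hs := by
          intro w hw
          have hadj : B.Adj u w := (mem_filter.mp hw).2
          have huH : u ∉ Hs := Finset.disjoint_right.mp hdisj (hSU hu)
          have hwU : w ∉ Us := fun hwU => huH ((hbip u w hadj).mpr hwU)
          have hmem : w ∈ Hs ∪ Us := hcover ▸ mem_univ w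
          rcases mem_union.mp hmem with h | h
          · exact h
          · exact absurd h hwU
        have hdegu := hdeg u (hSU hu)
        have hFD : Full.card < N.card := by
          have hkpos : (0:ℝ) < (k:ℝ) + 1 := by positivity
          have h5' : (m:ℝ) ≤ ((k:ℝ) + 1) * N.card := by
            have hmul := mul_le_mul_of_nonneg_left hdegu (le_of_lt hkpos)
            have heq : ((k:ℝ) + 1) * ((1 / ((k:ℝ) + 1) + α / 4) * m) =
                (m:ℝ) + ((k:ℝ) + 1) * α / 4 * m := by field_simp
            have hpos : (0:ℝ) ≤ ((k:ℝ) + 1) * α / 4 * m := by positivity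
            rw [heq] at hmul
            linarith
          have c1 : ((k:ℝ) - 1) * Full.card ≤ T.card := by
            have := (Nat.cast_le (α := ℝ)).mpr hA
            push_cast [Nat.cast_sub hk1] at this
            linarith
          have c2 : (T.card : ℝ) + 1 ≤ Us.card := by exact_mod_cast hT1
          have c3 : (Us.card : ℝ) + 2 * Hs.card ≤ m := by exact_mod_cast hsize
          have c4 : (N.card : ℝ) ≤ Hs.card := by exact_mod_cast Finset.card_le_card hNH
          by_contra hc
          push_neg at hc
          have hDF : (N.card : ℝ) ≤ Full.card := by exact_mod_cast hc
          have hkk : (0:ℝ) ≤ (k:ℝ) - 1 := by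
            have : (2:ℝ) ≤ (k:ℝ) := by exact_mod_cast hk
            linarith
          have := mul_le_mul_of_nonneg_left hDF hkk
          linarith
        have hex : (N \ Full).Nonempty := by
          rw [← Finset.card_pos]
          have := Finset.le_card_sdiff Full N
          omega
        obtain ⟨h0, hh0⟩ := hex
        have hh0N : h0 ∈ N := (mem_sdiff.mp hh0).1
        have hh0F : h0 ∉ Full := (mem_sdiff.mp hh0).2
        have hcount : (T.filter fun x => f x = h0).card + 1 ≤ k - 1 := by
          have : ¬ (k - 1 ≤ (T.filter fun x => f x = h0).card) := by
            intro hcon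
            exact hh0F (mem_filter.mpr ⟨mem_univ _, hcon⟩)
          omega
        refine ⟨Function.update f u h0, ?_, ?_⟩
        · intro x hx
          by_cases hxu : x = u
          · subst hxu
            rw [Function.update_self]
            exact (mem_filter.mp hh0N).2
          · rw [Function.update_of_ne hxu]
            exact hf1 x (mem_erase.mpr ⟨hxu, hx⟩)
        · intro h'
          have hST : S = insert u T := (Finset.insert_erase hu).symm
          have hTf : (T.filter fun x => Function.update f u h0 x = h') =
              T.filter fun x => f x = h' := by
            apply filter_congr
            intro x hx
            rw [Function.update_of_ne (Finset.mem_erase.mp hx).1]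
          rw [hST, filter_insert]
          by_cases hc : Function.update f u h0 u = h'
          · rw [if_pos hc, hTf]
            have huT : u ∉ T.filter fun x => f x = h' := fun hmem =>
              (mem_erase.mp (mem_filter.mp hmem).1).1 rfl
            rw [card_insert_of_notMem huT]
            have hh' : h' = h0 := by rw [Function.update_self] at hc; exact hc.symm
            subst hh'
            exact hcount
          · rw [if_neg hc, hTf]
            exact hf2 h'
  obtain ⟨f, hf1, hf2⟩ := key Us (subset_refl _)
  refine ⟨{ Adj := fun x y => (x ∈ Us ∧ f x = y ∧ B.Adj x y) ∨ (y ∈ Us ∧ f y = x ∧ B.Adj y x),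
            symm := by constructor; intro x y h; tauto,
            loopless := by
              constructor
              intro x h
              rcases h with ⟨_, _, h⟩ | ⟨_, _, h⟩ <;> exact B.irrefl h }, ?_, ?_, ?_⟩
  · intro x y h
    rcases h with ⟨_, _, h⟩ | ⟨_, _, h⟩
    · exact h
    · exact h.symm
  · intro u huU
    rw [Finset.card_eq_one]
    refine ⟨f u, ?_⟩
    ext w
    simp only [mem_filter, mem_univ, true_and, mem_singleton]
    constructor
    · rintro (⟨_, hfw, _⟩ | ⟨hwU, _, hadj2⟩)
      · exact hfw.symm
      · exact absurd ((hbip w u hadj2).mpr huU) (Finset.disjoint_right.mp hdisj hwU)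
    · rintro rfl
      exact Or.inl ⟨huU, rfl, hf1 u huU⟩
  · intro h hhH
    refine le_trans (Finset.card_le_card ?_) (hf2 h)
    intro w hw
    simp only [mem_filter, mem_univ, true_and] at hw
    rcases hw with ⟨hhU, _, _⟩ | ⟨hwU, hfw, _⟩
    · exact absurd hhU (Finset.disjoint_left.mp hdisj hhH)
    · exact mem_filter.mpr ⟨hwU, hfw⟩
end

section
/- Let X and Y be finite sets, let X = X₁ ∪ X₂ be a partition of X into two disjoint parts, let q₁, q₂ ∈ [0,1], and let λ be a probability distribution over injections φ : X → Y. Suppose that the marginal distribution of the restriction φ|_{X₁} is q₁-vertex-spread, and that for every injection ψ : X₁ → Y occurring with positive probability, the conditional distribution of φ|_{X₂} given φ|_{X₁} = ψ is q₂-vertex-spread. Then λ is max(q₁, q₂)-vertex-spread. -/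
open Finset
open scoped Classical

theorem vertex_spread_composition (X Y : Type) [Fintype X] [Fintype Y]
    [DecidableEq X] [DecidableEq Y]
    (X₁ : Finset X) (q₁ q₂ : ℝ)
    (hq₁0 : 0 ≤ q₁) (hq₁1 : q₁ ≤ 1) (hq₂0 : 0 ≤ q₂) (hq₂1 : q₂ ≤ 1)
    (lam : PMF {f : X → Y // Function.Injective f})
    -- the marginal of `φ|_{X₁}` is `q₁`-vertex-spread
    (hmarginal : ∀ (k : ℕ) (x : Fin k → X) (y : Fin k → Y),
      Function.Injective x → Function.Injective y → (∀ i, x i ∈ X₁) →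
      lam.toOuterMeasure {f | ∀ i, f.1 (x i) = y i} ≤ ENNReal.ofReal (q₁ ^ k))
    -- for every restriction `ψ` to `X₁` occurring with positive probability,
    -- the conditional distribution of `φ|_{X₂}` given `φ|_{X₁} = ψ` is
    -- `q₂`-vertex-spread (`X₂ = X \ X₁`)
    (hcond : ∀ ψ : X → Y,
      0 < lam.toOuterMeasure {f | ∀ a ∈ X₁, f.1 a = ψ a} →
      ∀ (k : ℕ) (x : Fin k → X) (y : Fin k → Y),
        Function.Injective x → Function.Injective y → (∀ i, x i ∉ X₁) →
        lam.toOuterMeasure {f | (∀ a ∈ X₁, f.1 a = ψ a) ∧ ∀ i, f.1 (x i) = y i} ≤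
          ENNReal.ofReal (q₂ ^ k) *
            lam.toOuterMeasure {f | ∀ a ∈ X₁, f.1 a = ψ a}) :
    -- `λ` is `max q₁ q₂`-vertex-spread
    ∀ (k : ℕ) (x : Fin k → X) (y : Fin k → Y),
      Function.Injective x → Function.Injective y →
      lam.toOuterMeasure {f | ∀ i, f.1 (x i) = y i} ≤
        ENNReal.ofReal (max q₁ q₂ ^ k) := by
  classical
  intro k x y hx hy
  -- the sample space is nonempty since a PMF on it exists
  have hne : Nonempty {f : X → Y // Function.Injective f} := by
    by_contra h
    rw [not_nonempty_iff] at h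
    have h0 := lam.tsum_coe
    rw [tsum_empty] at h0
    exact zero_ne_one h0
  obtain ⟨f₀⟩ := hne
  -- rewrite outer measures as finite sums
  have hm : ∀ s : Set {f : X → Y // Function.Injective f},
      lam.toOuterMeasure s = ∑ f : {f : X → Y // Function.Injective f},
        s.indicator (⇑lam) f := by
    intro s
    rw [PMF.toOuterMeasure_apply, tsum_fintype]
  have hmono : ∀ s t : Set {f : X → Y // Function.Injective f}, s ⊆ t →
      lam.toOuterMeasure s ≤ lam.toOuterMeasure t := by
    intro s t hst
    rw [hm s, hm t]
    exact Finset.sum_le_sum fun f _ => Set.indicator_le_indicator_of_subset hst (by simp) f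
  -- split the index set
  set S : Finset (Fin k) := Finset.univ.filter (fun i => x i ∈ X₁) with hSdef
  set k₁ := S.card with hk₁
  set k₂ := Sᶜ.card with hk₂
  have hkk : k₁ + k₂ = k := by
    rw [hk₁, hk₂, Finset.card_add_card_compl, Fintype.card_fin]
  set e₁ : Fin k₁ ≃o S := S.orderIsoOfFin rfl with he₁
  set e₂ : Fin k₂ ≃o (Sᶜ : Finset (Fin k)) := (Sᶜ).orderIsoOfFin rfl with he₂
  set x₁ : Fin k₁ → X := fun j => x (e₁ j) with hx₁
  set y₁ : Fin k₁ → Y := fun j => y (e₁ j) with hy₁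
  set x₂ : Fin k₂ → X := fun j => x (e₂ j) with hx₂
  set y₂ : Fin k₂ → Y := fun j => y (e₂ j) with hy₂
  have hx₁inj : Function.Injective x₁ :=
    hx.comp (Subtype.val_injective.comp e₁.injective)
  have hy₁inj : Function.Injective y₁ :=
    hy.comp (Subtype.val_injective.comp e₁.injective)
  have hx₂inj : Function.Injective x₂ :=
    hx.comp (Subtype.val_injective.comp e₂.injective)
  have hy₂inj : Function.Injective y₂ :=
    hy.comp (Subtype.val_injective.comp e₂.injective)
  have hSmem : ∀ i ∈ S, x i ∈ X₁ := fun i hi => (Finset.mem_filter.mp hi).2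
  have hx₁mem : ∀ j, x₁ j ∈ X₁ := fun j => hSmem _ (e₁ j).2
  have hx₂mem : ∀ j, x₂ j ∉ X₁ := by
    intro j hmem
    exact (Finset.mem_compl.mp (e₂ j).2)
      (Finset.mem_filter.mpr ⟨Finset.mem_univ _, hmem⟩)
  -- events
  set E : Set {f : X → Y // Function.Injective f} := {f | ∀ i, f.1 (x i) = y i} with hE
  set E₁ : Set {f : X → Y // Function.Injective f} := {f | ∀ i ∈ S, f.1 (x i) = y i} with hE₁
  set A : (X → Y) → Set {f : X → Y // Function.Injective f} :=
    fun ψ => {f | ∀ a ∈ X₁, f.1 a = ψ a} with hA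
  -- marginal bound
  have hbound1 : lam.toOuterMeasure E₁ ≤ ENNReal.ofReal (q₁ ^ k₁) := by
    refine le_trans (hmono _ {f | ∀ j, f.1 (x₁ j) = y₁ j} ?_)
      (hmarginal k₁ x₁ y₁ hx₁inj hy₁inj hx₁mem)
    intro f hf j
    exact hf (e₁ j) (e₁ j).2
  -- canonical extension
  set ext : {f : X → Y // Function.Injective f} → (X → Y) :=
    fun f a => if a ∈ X₁ then f.1 a else f₀.1 a with hext
  have hextA : ∀ f, f ∈ A (ext f) := by
    intro f a ha
    simp [hext, ha]
  set T : Finset {f : X → Y // Function.Injective f} :=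
    Finset.univ.filter (fun f => f ∈ E) with hT
  set Ψ : Finset (X → Y) := T.image ext with hΨ
  -- any member of `A ψ` for canonical `ψ` determines `ψ`
  have hcanon : ∀ ψ ∈ Ψ, ∀ f, f ∈ A ψ → ψ = ext f := by
    intro ψ hψ f hf
    rw [hΨ, Finset.mem_image] at hψ
    obtain ⟨g, hgT, rfl⟩ := hψ
    funext a
    by_cases ha : a ∈ X₁
    · have h1 : f.1 a = ext g a := hf a ha
      simp only [hext, if_pos ha] at h1 ⊢
      exact h1.symm
    · simp [hext, if_neg ha]
  -- the measure of E as a sum over T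
  have hmE : lam.toOuterMeasure E = ∑ f ∈ T, lam f := by
    rw [hm E, hT, Finset.sum_filter]
    refine Finset.sum_congr rfl fun f _ => ?_
    by_cases hf : f ∈ E <;> simp [Set.indicator_apply, hf]
  -- fiber decomposition
  have hfib : ∑ f ∈ T, lam f = ∑ ψ ∈ Ψ, ∑ f ∈ T.filter (fun f => ext f = ψ), lam f := by
    rw [hΨ]
    exact (Finset.sum_fiberwise_of_maps_to (fun f hf => Finset.mem_image_of_mem ext hf) _).symm
  -- per-fiber bound
  have hfiber : ∀ ψ ∈ Ψ, ∑ f ∈ T.filter (fun f => ext f = ψ), lam f ≤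
      ENNReal.ofReal (q₂ ^ k₂) * lam.toOuterMeasure (A ψ) := by
    intro ψ hψ
    have hsub : ∑ f ∈ T.filter (fun f => ext f = ψ), lam f ≤
        lam.toOuterMeasure {f : {f : X → Y // Function.Injective f} |
          (∀ a ∈ X₁, f.1 a = ψ a) ∧ ∀ j, f.1 (x₂ j) = y₂ j} := by
      rw [hm]
      refine le_trans (le_of_eq (Finset.sum_congr rfl ?_))
        (Finset.sum_le_sum_of_subset (Finset.subset_univ _))
      intro f hf
      rw [Finset.mem_filter, hT, Finset.mem_filter] at hf
      obtain ⟨⟨-, hfE⟩, hfψ⟩ := hf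
      have hmem : f ∈ {f : {f : X → Y // Function.Injective f} |
          (∀ a ∈ X₁, f.1 a = ψ a) ∧ ∀ j, f.1 (x₂ j) = y₂ j} := by
        constructor
        · intro a ha
          rw [← hfψ]
          simp [hext, ha]
        · intro j
          exact hfE (e₂ j)
      rw [Set.indicator_of_mem hmem]
    by_cases hpos : 0 < lam.toOuterMeasure (A ψ)
    · exact le_trans hsub (hcond ψ hpos k₂ x₂ y₂ hx₂inj hy₂inj hx₂mem)
    · have hz : lam.toOuterMeasure (A ψ) = 0 := by
        simpa using (not_lt.mp hpos)
      have hAle : lam.toOuterMeasure {f : {f : X → Y // Function.Injective f} |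
          (∀ a ∈ X₁, f.1 a = ψ a) ∧ ∀ j, f.1 (x₂ j) = y₂ j}
          ≤ lam.toOuterMeasure (A ψ) := hmono _ _ (fun f hf => hf.1)
      calc ∑ f ∈ T.filter (fun f => ext f = ψ), lam f ≤ _ := hsub
        _ ≤ lam.toOuterMeasure (A ψ) := hAle
        _ = 0 := hz
        _ ≤ _ := zero_le
  -- sum over fibers bound by E₁
  have hAsub : ∀ ψ ∈ Ψ, A ψ ⊆ E₁ := by
    intro ψ hψ
    rw [hΨ, Finset.mem_image] at hψ
    obtain ⟨g, hgT, rfl⟩ := hψ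
    rw [hT, Finset.mem_filter] at hgT
    intro f hf i hi
    have hxi : x i ∈ X₁ := hSmem i hi
    have h1 : f.1 (x i) = ext g (x i) := hf (x i) hxi
    have h2 : ext g (x i) = g.1 (x i) := by simp [hext, hxi]
    rw [h1, h2]
    exact hgT.2 i
  have hsumA : ∑ ψ ∈ Ψ, lam.toOuterMeasure (A ψ) ≤ lam.toOuterMeasure E₁ := by
    simp only [hm]
    rw [Finset.sum_comm]
    refine Finset.sum_le_sum fun f _ => ?_
    by_cases hin : ext f ∈ Ψ
    · have heq : ∑ ψ ∈ Ψ, (A ψ).indicator (⇑lam) f = (A (ext f)).indicator (⇑lam) f := by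
        refine Finset.sum_eq_single_of_mem _ hin ?_
        intro ψ hψ hne'
        rw [Set.indicator_of_notMem]
        intro hf
        exact hne' (hcanon ψ hψ f hf)
      rw [heq, Set.indicator_of_mem (hextA f), Set.indicator_of_mem (hAsub _ hin (hextA f))]
    · have heq : ∑ ψ ∈ Ψ, (A ψ).indicator (⇑lam) f = 0 := by
        refine Finset.sum_eq_zero fun ψ hψ => ?_
        rw [Set.indicator_of_notMem]
        intro hf
        exact hin ((hcanon ψ hψ f hf) ▸ hψ)
      rw [heq]
      exact zero_le
  -- combine
  have hmain : lam.toOuterMeasure E ≤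
      ENNReal.ofReal (q₂ ^ k₂) * ENNReal.ofReal (q₁ ^ k₁) := by
    calc lam.toOuterMeasure E = ∑ f ∈ T, lam f := hmE
      _ = ∑ ψ ∈ Ψ, ∑ f ∈ T.filter (fun f => ext f = ψ), lam f := hfib
      _ ≤ ∑ ψ ∈ Ψ, ENNReal.ofReal (q₂ ^ k₂) * lam.toOuterMeasure (A ψ) :=
          Finset.sum_le_sum hfiber
      _ = ENNReal.ofReal (q₂ ^ k₂) * ∑ ψ ∈ Ψ, lam.toOuterMeasure (A ψ) := by
          rw [Finset.mul_sum]
      _ ≤ ENNReal.ofReal (q₂ ^ k₂) * lam.toOuterMeasure E₁ :=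
          mul_le_mul_right hsumA _
      _ ≤ ENNReal.ofReal (q₂ ^ k₂) * ENNReal.ofReal (q₁ ^ k₁) :=
          mul_le_mul_right hbound1 _
  refine le_trans hmain ?_
  rw [← ENNReal.ofReal_mul (by positivity)]
  refine ENNReal.ofReal_le_ofReal ?_
  have h1 : q₂ ^ k₂ ≤ (max q₁ q₂) ^ k₂ := pow_le_pow_left₀ hq₂0 (le_max_right _ _) _
  have h2 : q₁ ^ k₁ ≤ (max q₁ q₂) ^ k₁ := pow_le_pow_left₀ hq₁0 (le_max_left _ _) _
  calc q₂ ^ k₂ * q₁ ^ k₁ ≤ (max q₁ q₂) ^ k₂ * (max q₁ q₂) ^ k₁ :=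
        mul_le_mul h1 h2 (by positivity) (by positivity)
    _ = (max q₁ q₂) ^ k := by rw [← pow_add, Nat.add_comm, hkk]
end
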